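/- arXiv:1501.05485 — 2 statements merged into one kernel-verified Lean document; each statement's English description precedes it below -/
import Mathlib

section
/- Let m ≥ 2 be an integer and let a satisfy 1/m ≤ a and a + 1/m ≤ 1. Then max_{x ∈ [0,1]} |G_a^{-1}(x) − G_{a+1/m}^{-1}(x)| < 11/m; consequently, for V uniform on [0,1], the total variation distance between the laws of G_a(V) and G_{a+1/m}(V) is less than 11/m. -/
open MeasureTheory

/-- The breakpoint `u₀(b) = 1 - (1-b)·e^b`. -/
noncomputable def u0 (b : ℝ) : ℝ := 1 - (1 - b) * Real.exp b

/-- The function `G_b : [0,1] → [0,1]`:  `G_b(u) = e^{1-b}·u` for `u ≤ u₀(b)` and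
`G_b(u) = e^{e^{-b}(1-u)} - (1-u)·e^{1-b}` for `u > u₀(b)`.  For `a ∈ (0,1]` it is a
strictly increasing continuous bijection of `[0,1]` onto itself. -/
noncomputable def Gfun (b u : ℝ) : ℝ :=
  if u ≤ u0 b then Real.exp (1 - b) * u
  else Real.exp (Real.exp (-b) * (1 - u)) - (1 - u) * Real.exp (1 - b)

/-- The inverse `G_a⁻¹` of `G_a`. -/
noncomputable def Ginv (a : ℝ) : ℝ → ℝ := Function.invFun (Gfun a)

/-- The uniform distribution on `[0,1]` (the law of `V`). -/
noncomputable def unif01 : Measure ℝ := volume.restrict (Set.Icc 0 1)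

open Real Set Filter Topology

/-- auxiliary function: `phi s = e^s - e·s`. -/
noncomputable def phi (s : ℝ) : ℝ := Real.exp s - Real.exp 1 * s

/-- breakpoint in `x`-space -/
noncomputable def Bfun (c : ℝ) : ℝ := Real.exp (1 - c) * u0 c

/-- clamp to `[0,1]` -/
noncomputable def cl (x : ℝ) : ℝ := min 1 (max x 0)

lemma phi_zero : phi 0 = 1 := by simp [phi]

lemma phi_cont : Continuous phi := by
  unfold phi; continuity

lemma phi_nonneg (s : ℝ) : 0 ≤ phi s := by
  unfold phi
  rcases le_or_gt s 0 with h | h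
  · nlinarith [Real.exp_pos s, Real.exp_pos (1:ℝ)]
  · have h1 : (s - 1) + 1 ≤ Real.exp (s - 1) := Real.add_one_le_exp _
    have h2 : Real.exp s = Real.exp 1 * Real.exp (s - 1) := by
      rw [← Real.exp_add]; ring_nf
    nlinarith [Real.exp_pos (1:ℝ)]

lemma phi_lt {x y : ℝ} (hxy : x < y) (hy : y ≤ 1) : phi y < phi x := by
  unfold phi
  have t0 : (0:ℝ) < y - x := by linarith
  have hex : (0:ℝ) < Real.exp x := Real.exp_pos x
  have hexy : (0:ℝ) < Real.exp (y - x) := Real.exp_pos _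
  have h2 : Real.exp y = Real.exp x * Real.exp (y - x) := by
    rw [← Real.exp_add]; ring_nf
  -- 1 - t < e^{-t}, hence e^t - 1 < t e^t
  have hneg : 1 - (y - x) < Real.exp (-(y - x)) := by
    have := Real.add_one_lt_exp (x := -(y - x)) (by intro h; nlinarith)
    linarith
  have hmul : Real.exp (-(y - x)) * Real.exp (y - x) = 1 := by
    rw [← Real.exp_add]; simp
  have h3' : Real.exp (y - x) - 1 < (y - x) * Real.exp (y - x) := by nlinarith
  have h3 : Real.exp y - Real.exp x < (y - x) * Real.exp y := by nlinarith
  have h4 : Real.exp y ≤ Real.exp 1 := Real.exp_le_exp.mpr hy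
  nlinarith

lemma phi_le {x y : ℝ} (hxy : x ≤ y) (hy : y ≤ 1) : phi y ≤ phi x := by
  rcases eq_or_lt_of_le hxy with rfl | h
  · exact le_refl _
  · exact (phi_lt h hy).le

lemma phi_arg_le {x y : ℝ} (hx : x ≤ 1) (hy : y ≤ 1) (h : phi x ≤ phi y) : y ≤ x := by
  by_contra hc
  push_neg at hc
  exact absurd h (not_le.mpr (phi_lt hc hy))
section Glemmas

variable {c : ℝ}

lemma exp_le_one' {x : ℝ} (h : x ≤ 0) : Real.exp x ≤ 1 := by
  rw [← Real.exp_zero]; exact Real.exp_le_exp.mpr h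

lemma one_le_exp' {x : ℝ} (h : 0 ≤ x) : 1 ≤ Real.exp x := by
  rw [← Real.exp_zero]; exact Real.exp_le_exp.mpr h

lemma u0_nonneg (hc : 0 ≤ c) : 0 ≤ u0 c := by
  unfold u0
  have h : 1 - c ≤ Real.exp (-c) := by
    have := Real.add_one_le_exp (-c); linarith
  have h2 : Real.exp (-c) * Real.exp c = 1 := by rw [← Real.exp_add]; simp
  nlinarith [Real.exp_pos c]

lemma u0_le_one (hc1 : c ≤ 1) : u0 c ≤ 1 := by
  unfold u0
  nlinarith [Real.exp_pos c]

lemma B_nonneg (hc : 0 ≤ c) : 0 ≤ Bfun c := by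
  unfold Bfun
  exact mul_nonneg (Real.exp_pos _).le (u0_nonneg hc)

lemma B_eq (c : ℝ) : Bfun c = Real.exp (1 - c) - (1 - c) * Real.exp 1 := by
  unfold Bfun u0
  have h : Real.exp (1 - c) * Real.exp c = Real.exp 1 := by rw [← Real.exp_add]; ring_nf
  linear_combination (c - 1) * h

lemma phi_val (c : ℝ) : phi (1 - c) = Bfun c := by
  rw [B_eq]; unfold phi; ring

lemma B_le_one (hc : 0 ≤ c) (hc1 : c ≤ 1) : Bfun c ≤ 1 := by
  rw [← phi_val]
  have := phi_le (x := 0) (y := 1 - c) (by linarith) (by linarith)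
  rw [phi_zero] at this; exact this

lemma B_mono {a b : ℝ} (ha : 0 ≤ a) (hab : a ≤ b) : Bfun a ≤ Bfun b := by
  rw [← phi_val, ← phi_val]
  exact phi_le (by linarith) (by linarith)

lemma exp_mul_exp_cancel (x : ℝ) : Real.exp x * Real.exp (-x) = 1 := by
  rw [← Real.exp_add]; simp

/-- second-branch formula equals `phi` of the argument -/
lemma branch2_eq (c u : ℝ) :
    Real.exp (Real.exp (-c) * (1 - u)) - (1 - u) * Real.exp (1 - c)
      = phi (Real.exp (-c) * (1 - u)) := by
  unfold phi
  have h1 : Real.exp 1 * (Real.exp (-c) * (1 - u)) = Real.exp (1 - c) * (1 - u) := by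
    rw [← mul_assoc, ← Real.exp_add]; ring_nf
  rw [h1]; ring

lemma u0_iff (c u : ℝ) : u ≤ u0 c ↔ 1 - c ≤ Real.exp (-c) * (1 - u) := by
  unfold u0
  rw [show Real.exp (-c) * (1 - u) = (1 - u) * Real.exp (-c) by ring]
  constructor
  · intro h
    have h3 : (1 - c) * Real.exp c ≤ 1 - u := by linarith
    calc 1 - c = (1 - c) * Real.exp c * Real.exp (-c) := by
          rw [mul_assoc, exp_mul_exp_cancel]; ring
      _ ≤ (1 - u) * Real.exp (-c) := mul_le_mul_of_nonneg_right h3 (Real.exp_pos _).le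
  · intro h
    have h2 : (1 - c) * Real.exp c ≤ (1 - u) * Real.exp (-c) * Real.exp c := by
      exact mul_le_mul_of_nonneg_right h (Real.exp_pos _).le
    rw [mul_assoc, ← Real.exp_add] at h2
    simp at h2
    linarith

/-- `Gfun` is the min of the two branch formulas. -/
lemma Gfun_eq_min (c u : ℝ) :
    Gfun c u = min (Real.exp (1 - c) * u) (phi (Real.exp (-c) * (1 - u))) := by
  have key : phi (Real.exp (-c) * (1 - u)) - Real.exp (1 - c) * u
      = Real.exp (Real.exp (-c) * (1 - u)) - Real.exp (1 - c) := by
    rw [← branch2_eq]; ring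
  unfold Gfun
  rcases le_or_gt u (u0 c) with h | h
  · rw [if_pos h]
    have : Real.exp (1 - c) ≤ Real.exp (Real.exp (-c) * (1 - u)) :=
      Real.exp_le_exp.mpr ((u0_iff c u).mp h)
    rw [min_eq_left (by linarith)]
  · rw [if_neg (not_le.mpr h)]
    have harg2 : ¬ (1 - c ≤ Real.exp (-c) * (1 - u)) :=
      fun hh => absurd ((u0_iff c u).mpr hh) (not_le.mpr h)
    push_neg at harg2
    have : Real.exp (Real.exp (-c) * (1 - u)) ≤ Real.exp (1 - c) :=
      Real.exp_le_exp.mpr harg2.le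
    rw [branch2_eq, min_eq_right (by linarith)]

lemma Gfun_cont (c : ℝ) : Continuous (Gfun c) := by
  have : Gfun c = fun u => min (Real.exp (1 - c) * u) (phi (Real.exp (-c) * (1 - u))) :=
    funext (Gfun_eq_min c)
  rw [this]
  exact (continuous_const.mul continuous_id).min
    (phi_cont.comp (continuous_const.mul (continuous_const.sub continuous_id)))

lemma Gfun_zero (c : ℝ) : Gfun c 0 = 0 := by
  rw [Gfun_eq_min]
  simp only [mul_zero, sub_zero, mul_one]
  exact min_eq_left (phi_nonneg _)

lemma Gfun_one (hc1 : c ≤ 1) : Gfun c 1 = 1 := by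
  rw [Gfun_eq_min]
  simp only [mul_one, sub_self, mul_zero, phi_zero]
  exact min_eq_right (one_le_exp' (by linarith))

lemma Gfun_strictMono (hc : 0 < c) (hc1 : c ≤ 1) : StrictMono (Gfun c) := by
  intro u v huv
  rw [Gfun_eq_min, Gfun_eq_min]
  have hL : Real.exp (1 - c) * u < Real.exp (1 - c) * v :=
    mul_lt_mul_of_pos_left huv (Real.exp_pos _)
  apply lt_min
  · exact lt_of_le_of_lt (min_le_left _ _) hL
  · set Xu := Real.exp (-c) * (1 - u) with hXu
    set Xv := Real.exp (-c) * (1 - v) with hXv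
    have hXuv : Xv < Xu := by
      apply mul_lt_mul_of_pos_left _ (Real.exp_pos _)
      linarith
    rcases le_or_gt Xu 1 with h1 | h1
    · exact lt_of_le_of_lt (min_le_right _ _) (phi_lt hXuv h1)
    · have h1u : 0 < 1 - u := by
        rcases le_or_gt (1 - u) 0 with h | h
        · exfalso
          have : Xu ≤ 0 := mul_nonpos_of_nonneg_of_nonpos (Real.exp_pos _).le h
          linarith
        · exact h
      have hu0 : u < 0 := by
        have hexc : Real.exp (-c) ≤ 1 := exp_le_one' (by linarith)
        have : Xu ≤ 1 - u := by
          calc Xu = Real.exp (-c) * (1 - u) := rfl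
            _ ≤ 1 * (1 - u) := mul_le_mul_of_nonneg_right hexc h1u.le
            _ = 1 - u := one_mul _
        linarith
      have hLu : Real.exp (1 - c) * u < 0 :=
        mul_neg_of_pos_of_neg (Real.exp_pos _) hu0
      exact lt_of_le_of_lt (min_le_left _ _)
        (lt_of_lt_of_le hLu (phi_nonneg _))

end Glemmas
section GinvLemmas

variable {c : ℝ}

lemma Gfun_surj (hc : 0 < c) (hc1 : c ≤ 1) : Function.Surjective (Gfun c) := by
  intro y
  rcases lt_trichotomy y 0 with hy | hy | hy
  · refine ⟨Real.exp (c - 1) * y, ?_⟩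
    rw [Gfun_eq_min]
    have hL : Real.exp (1 - c) * (Real.exp (c - 1) * y) = y := by
      rw [← mul_assoc, ← Real.exp_add]
      ring_nf
      simp
    rw [hL]
    exact min_eq_left (by linarith [phi_nonneg (Real.exp (-c) * (1 - Real.exp (c - 1) * y))])
  · exact ⟨0, by rw [Gfun_zero, hy]⟩
  · rcases le_or_gt y 1 with hy1 | hy1
    · -- IVT on [0,1]
      have hmem : y ∈ Set.Icc (Gfun c 0) (Gfun c 1) := by
        rw [Gfun_zero, Gfun_one hc1]; exact ⟨hy.le, hy1⟩
      obtain ⟨u, _, hu⟩ := intermediate_value_Icc (by norm_num : (0:ℝ) ≤ 1)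
        ((Gfun_cont c).continuousOn) hmem
      exact ⟨u, hu⟩
    · -- IVT on [1, R]
      set R := 1 + Real.exp (c - 1) * y with hR
      have hR1 : 1 ≤ R := by
        have : 0 < Real.exp (c - 1) * y := by positivity
        linarith
      have hGR : y ≤ Gfun c R := by
        rw [Gfun_eq_min]
        apply le_min
        · have : Real.exp (1 - c) * R = Real.exp (1 - c) + y := by
            rw [hR, mul_add, ← mul_assoc, ← Real.exp_add]
            ring_nf
            simp
          rw [this]
          linarith [Real.exp_pos (1 - c)]
        · have hh : Real.exp (-1) = Real.exp (-c) * Real.exp (c - 1) := by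
            rw [← Real.exp_add]; ring_nf
          have harg : Real.exp (-c) * (1 - R) = -(Real.exp (-1) * y) := by
            rw [hR]; linear_combination y * hh
          rw [harg]
          unfold phi
          have h1 : Real.exp 1 * Real.exp (-1) = 1 := exp_mul_exp_cancel 1
          have h2 : Real.exp 1 * -(Real.exp (-1) * y) = -y := by
            linear_combination (-y) * h1
          rw [h2]
          have := Real.exp_pos (-(Real.exp (-1) * y))
          linarith
      have hmem : y ∈ Set.Icc (Gfun c 1) (Gfun c R) := by
        rw [Gfun_one hc1]; exact ⟨hy1.le, hGR⟩
      obtain ⟨u, _, hu⟩ := intermediate_value_Icc hR1 ((Gfun_cont c).continuousOn) hmem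
      exact ⟨u, hu⟩

lemma Gfun_Ginv (hc : 0 < c) (hc1 : c ≤ 1) (x : ℝ) : Gfun c (Ginv c x) = x :=
  Function.invFun_eq (Gfun_surj hc hc1 x)

lemma Ginv_eq (hc : 0 < c) (hc1 : c ≤ 1) {u x : ℝ} (h : Gfun c u = x) : Ginv c x = u :=
  (Gfun_strictMono hc hc1).injective (by rw [Gfun_Ginv hc hc1, h])

lemma Ginv_mono (hc : 0 < c) (hc1 : c ≤ 1) : Monotone (Ginv c) := by
  intro x y hxy
  have := (Gfun_strictMono hc hc1).le_iff_le (a := Ginv c x) (b := Ginv c y)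
  rw [Gfun_Ginv hc hc1, Gfun_Ginv hc hc1] at this
  exact this.mp hxy

lemma Ginv_cont (hc : 0 < c) (hc1 : c ≤ 1) : Continuous (Ginv c) := by
  let e := StrictMono.orderIsoOfSurjective (Gfun c) (Gfun_strictMono hc hc1) (Gfun_surj hc hc1)
  have he : Ginv c = ⇑e.symm := by
    funext x
    exact Ginv_eq hc hc1 (StrictMono.orderIsoOfSurjective_self_symm_apply _ _ _ x)
  rw [he]
  exact OrderIso.continuous e.symm

lemma Ginv_zero (hc : 0 < c) (hc1 : c ≤ 1) : Ginv c 0 = 0 :=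
  Ginv_eq hc hc1 (Gfun_zero c)

lemma Ginv_one (hc : 0 < c) (hc1 : c ≤ 1) : Ginv c 1 = 1 :=
  Ginv_eq hc hc1 (Gfun_one hc1)

lemma Ginv_mem (hc : 0 < c) (hc1 : c ≤ 1) {x : ℝ} (hx : x ∈ Set.Icc (0:ℝ) 1) :
    Ginv c x ∈ Set.Icc (0:ℝ) 1 := by
  constructor
  · rw [← Ginv_zero hc hc1]; exact Ginv_mono hc hc1 hx.1
  · rw [← Ginv_one hc hc1]; exact Ginv_mono hc hc1 hx.2

/-- linear branch of the inverse -/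
lemma Ginv_lin (hc : 0 < c) (hc1 : c ≤ 1) {x : ℝ} (hx : x ≤ Bfun c) :
    Ginv c x = Real.exp (c - 1) * x := by
  apply Ginv_eq hc hc1
  unfold Gfun
  have hu : Real.exp (c - 1) * x ≤ u0 c := by
    have := mul_le_mul_of_nonneg_left hx (Real.exp_pos (c - 1)).le
    unfold Bfun at this
    rw [← mul_assoc, ← Real.exp_add] at this
    simpa using this
  rw [if_pos hu, ← mul_assoc, ← Real.exp_add]
  simp

/-- parametric form of `Gfun` on the exponential branch -/
lemma Gfun_param (hc1 : c ≤ 1) {s : ℝ} (hs : 0 ≤ s) (hs' : s ≤ 1 - c) :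
    Gfun c (1 - s * Real.exp c) = phi s := by
  rw [Gfun_eq_min]
  have harg : Real.exp (-c) * (1 - (1 - s * Real.exp c)) = s := by
    have := exp_mul_exp_cancel c
    ring_nf
    nlinarith [this]
  rw [harg]
  apply min_eq_right
  unfold phi
  have hL : Real.exp (1 - c) * (1 - s * Real.exp c) = Real.exp (1 - c) - s * Real.exp 1 := by
    have : Real.exp (1 - c) * Real.exp c = Real.exp 1 := by rw [← Real.exp_add]; ring_nf
    nlinarith [this]
  rw [hL]
  have : Real.exp s ≤ Real.exp (1 - c) := Real.exp_le_exp.mpr (by linarith)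
  linarith

lemma Ginv_param (hc : 0 < c) (hc1 : c ≤ 1) {s : ℝ} (hs : 0 ≤ s) (hs' : s ≤ 1 - c) :
    Ginv c (phi s) = 1 - s * Real.exp c :=
  Ginv_eq hc hc1 (Gfun_param hc1 hs hs')

lemma exists_param (hc1 : c ≤ 1) {x : ℝ} (hx : Bfun c ≤ x) (hx1 : x ≤ 1) :
    ∃ s, 0 ≤ s ∧ s ≤ 1 - c ∧ phi s = x := by
  have h0c : (0:ℝ) ≤ 1 - c := by linarith
  have hmem : x ∈ Set.Icc (phi (1 - c)) (phi 0) := by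
    rw [phi_val, phi_zero]; exact ⟨hx, hx1⟩
  obtain ⟨s, hs, hφ⟩ := intermediate_value_Icc' h0c (phi_cont.continuousOn) hmem
  exact ⟨s, hs.1, hs.2, hφ⟩

end GinvLemmas
section MeasureLemmas

variable {c : ℝ}

lemma cl_mono : Monotone cl := fun x y h =>
  min_le_min le_rfl (max_le_max h le_rfl)

lemma cl_cont : Continuous cl := continuous_const.min (continuous_id.max continuous_const)

lemma cl_mem (x : ℝ) : cl x ∈ Set.Icc (0:ℝ) 1 := by
  unfold cl
  constructor
  · exact le_min (by norm_num) (le_max_right _ _)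
  · exact min_le_left _ _

lemma cl_of_mem {x : ℝ} (hx : x ∈ Set.Icc (0:ℝ) 1) : cl x = x := by
  unfold cl
  rw [max_eq_left hx.1, min_eq_right hx.2]

lemma cl_of_le {x : ℝ} (hx : x ≤ 0) : cl x = 0 := by
  unfold cl
  rw [max_eq_right hx, min_eq_right (by norm_num)]

lemma cl_of_ge {x : ℝ} (hx : 1 ≤ x) : cl x = 1 := by
  unfold cl
  rw [min_eq_left (le_max_of_le_left hx)]

lemma unif01_Iic (s : ℝ) : unif01 (Set.Iic s) = ENNReal.ofReal (cl s) := by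
  unfold unif01
  rw [Measure.restrict_apply measurableSet_Iic]
  rcases le_or_gt s 0 with h | h
  · rcases eq_or_lt_of_le h with rfl | h'
    · have : Set.Iic (0:ℝ) ∩ Set.Icc 0 1 = Set.Icc 0 0 := by
        ext u; simp only [Set.mem_inter_iff, Set.mem_Iic, Set.mem_Icc]
        constructor
        · rintro ⟨h1, h2, _⟩; exact ⟨h2, h1⟩
        · rintro ⟨h1, h2⟩; exact ⟨h2, h1, by linarith⟩
      rw [this, Real.volume_Icc, cl_of_le le_rfl]
      norm_num
    · have : Set.Iic s ∩ Set.Icc 0 1 = ∅ := by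
        ext u; simp only [Set.mem_inter_iff, Set.mem_Iic, Set.mem_Icc, Set.mem_empty_iff_false,
          iff_false]
        rintro ⟨h1, h2, _⟩; linarith
      rw [this, cl_of_le h]
      simp
  · have : Set.Iic s ∩ Set.Icc 0 1 = Set.Icc 0 (min s 1) := by
      ext u
      simp only [Set.mem_inter_iff, Set.mem_Iic, Set.mem_Icc, le_min_iff]
      constructor
      · rintro ⟨h1, h2, h3⟩; exact ⟨h2, h1, h3⟩
      · rintro ⟨h1, h2, h3⟩; exact ⟨h2, h1, h3⟩
    rw [this, Real.volume_Icc]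
    congr 1
    unfold cl
    rw [max_eq_left h.le, min_comm]
    ring
lemma Gfun_preimage_Iic (hc : 0 < c) (hc1 : c ≤ 1) (t : ℝ) :
    Gfun c ⁻¹' Set.Iic t = Set.Iic (Ginv c t) := by
  ext u
  simp only [Set.mem_preimage, Set.mem_Iic]
  constructor
  · intro h
    have := (Gfun_strictMono hc hc1).le_iff_le (a := u) (b := Ginv c t)
    rw [Gfun_Ginv hc hc1] at this
    exact this.mp h
  · intro h
    have := (Gfun_strictMono hc hc1).le_iff_le (a := u) (b := Ginv c t)
    rw [Gfun_Ginv hc hc1] at this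
    exact this.mpr h

lemma cl_Ginv (hc : 0 < c) (hc1 : c ≤ 1) (t : ℝ) : cl (Ginv c t) = Ginv c (cl t) := by
  rcases le_or_gt t 0 with h | h
  · have h1 : Ginv c t ≤ 0 := by
      rw [← Ginv_zero hc hc1]; exact Ginv_mono hc hc1 h
    rw [cl_of_le h1, cl_of_le h, Ginv_zero hc hc1]
  · rcases le_or_gt t 1 with h2 | h2
    · rw [cl_of_mem ⟨h.le, h2⟩, cl_of_mem (Ginv_mem hc hc1 ⟨h.le, h2⟩)]
    · have h1 : 1 ≤ Ginv c t := by
        rw [← Ginv_one hc hc1]; exact Ginv_mono hc hc1 h2.le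
      rw [cl_of_ge h1, cl_of_ge h2.le, Ginv_one hc hc1]

lemma mapG_Iic (hc : 0 < c) (hc1 : c ≤ 1) (t : ℝ) :
    (Measure.map (Gfun c) unif01) (Set.Iic t) = ENNReal.ofReal (Ginv c (cl t)) := by
  rw [Measure.map_apply (Gfun_cont c).measurable measurableSet_Iic,
    Gfun_preimage_Iic hc hc1, unif01_Iic, cl_Ginv hc hc1]

lemma mapG_univ (c : ℝ) : (Measure.map (Gfun c) unif01) Set.univ = 1 := by
  rw [Measure.map_apply (Gfun_cont c).measurable MeasurableSet.univ]
  simp only [Set.preimage_univ]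
  unfold unif01
  rw [Measure.restrict_apply MeasurableSet.univ]
  simp [Real.volume_Icc]

lemma mapG_finite (c : ℝ) : IsFiniteMeasure (Measure.map (Gfun c) unif01) :=
  ⟨by rw [mapG_univ]; exact ENNReal.one_lt_top⟩

end MeasureLemmas
section Regions

variable {a δ : ℝ}

lemma exp_delta_le (hδ : 0 < δ) (hδ' : δ ≤ 1/11) : Real.exp δ ≤ 11/10 := by
  have h1 : 1 - δ ≤ Real.exp (-δ) := by
    have := Real.add_one_le_exp (-δ); linarith
  have h2 : Real.exp δ * Real.exp (-δ) = 1 := exp_mul_exp_cancel δ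
  nlinarith [Real.exp_pos δ]

lemma coef_bounds (hδ : 0 < δ) (ha : δ ≤ a) (hab : a + δ ≤ 1) :
    0 ≤ Real.exp (a+δ-1) - Real.exp (a-1) ∧ Real.exp (a+δ-1) - Real.exp (a-1) ≤ δ := by
  have hsplit : Real.exp (a-1) = Real.exp (a+δ-1) * Real.exp (-δ) := by
    rw [← Real.exp_add]; ring_nf
  have h1 : 1 - δ ≤ Real.exp (-δ) := by
    have := Real.add_one_le_exp (-δ); linarith
  have h2 : Real.exp (-δ) ≤ 1 := exp_le_one' (by linarith)
  have h3 : Real.exp (a+δ-1) ≤ 1 := exp_le_one' (by linarith)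
  constructor
  · nlinarith [Real.exp_pos (a+δ-1)]
  · nlinarith [Real.exp_pos (a+δ-1)]

lemma reg1_eq (hδ : 0 < δ) (ha : δ ≤ a) (hab : a + δ ≤ 1) :
    ∀ x, x ≤ Bfun a → Ginv a x - Ginv (a+δ) x = -((Real.exp (a+δ-1) - Real.exp (a-1)) * x) := by
  intro x hx
  have ha0 : 0 < a := lt_of_lt_of_le hδ ha
  have hxb : x ≤ Bfun (a+δ) := le_trans hx (B_mono ha0.le (by linarith))
  rw [Ginv_lin ha0 (by linarith) hx, Ginv_lin (by linarith) (by linarith) hxb]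
  ring

lemma reg1_bounds (hδ : 0 < δ) (ha : δ ≤ a) (hab : a + δ ≤ 1) :
    ∀ x, 0 ≤ x → x ≤ Bfun a → -δ ≤ Ginv a x - Ginv (a+δ) x ∧ Ginv a x - Ginv (a+δ) x ≤ 0 := by
  intro x hx0 hx
  have ha0 : 0 < a := lt_of_lt_of_le hδ ha
  have hx1 : x ≤ 1 := le_trans hx (B_le_one ha0.le (by linarith))
  rw [reg1_eq hδ ha hab x hx]
  obtain ⟨hc0, hcδ⟩ := coef_bounds hδ ha hab
  constructor
  · nlinarith
  · nlinarith

lemma reg1_anti (hδ : 0 < δ) (ha : δ ≤ a) (hab : a + δ ≤ 1) :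
    ∀ x y, x ≤ y → y ≤ Bfun a → Ginv a y - Ginv (a+δ) y ≤ Ginv a x - Ginv (a+δ) x := by
  intro x y hxy hy
  rw [reg1_eq hδ ha hab x (le_trans hxy hy), reg1_eq hδ ha hab y hy]
  obtain ⟨hc0, _⟩ := coef_bounds hδ ha hab
  nlinarith

lemma reg3_repr (hδ : 0 < δ) (ha : δ ≤ a) (hab : a + δ ≤ 1) :
    ∀ x, Bfun (a+δ) ≤ x → x ≤ 1 → ∃ s, 0 ≤ s ∧ s ≤ 1-(a+δ) ∧ phi s = x ∧
      Ginv a x - Ginv (a+δ) x = s * (Real.exp (a+δ) - Real.exp a) := by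
  intro x hx hx1
  have ha0 : 0 < a := lt_of_lt_of_le hδ ha
  obtain ⟨s, hs0, hs1, hφ⟩ := exists_param (by linarith : a+δ ≤ 1) hx hx1
  refine ⟨s, hs0, hs1, hφ, ?_⟩
  have h1 : Ginv (a+δ) x = 1 - s * Real.exp (a+δ) := by
    rw [← hφ]; exact Ginv_param (by linarith) (by linarith) hs0 hs1
  have h2 : Ginv a x = 1 - s * Real.exp a := by
    rw [← hφ]; exact Ginv_param ha0 (by linarith) hs0 (by linarith)
  rw [h1, h2]; ring

lemma expb_sub_expa (hδ : 0 < δ) (ha : δ ≤ a) (hab : a + δ ≤ 1) :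
    0 ≤ Real.exp (a+δ) - Real.exp a ∧ (1-(a+δ)) * (Real.exp (a+δ) - Real.exp a) ≤ δ := by
  have hsplit : Real.exp a = Real.exp (a+δ) * Real.exp (-δ) := by
    rw [← Real.exp_add]; ring_nf
  have h1 : 1 - δ ≤ Real.exp (-δ) := by
    have := Real.add_one_le_exp (-δ); linarith
  have h2 : Real.exp (-δ) ≤ 1 := exp_le_one' (by linarith)
  have h3 : 0 ≤ 1 - (1-(a+δ)) * Real.exp (a+δ) := u0_nonneg (by linarith)
  have h4 : (0:ℝ) < Real.exp (a+δ) := Real.exp_pos _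
  constructor
  · nlinarith
  · nlinarith

lemma reg3_bounds (hδ : 0 < δ) (ha : δ ≤ a) (hab : a + δ ≤ 1) :
    ∀ x, Bfun (a+δ) ≤ x → x ≤ 1 → 0 ≤ Ginv a x - Ginv (a+δ) x ∧ Ginv a x - Ginv (a+δ) x ≤ δ := by
  intro x hx hx1
  obtain ⟨s, hs0, hs1, _, hd⟩ := reg3_repr hδ ha hab x hx hx1
  obtain ⟨he0, he1⟩ := expb_sub_expa hδ ha hab
  rw [hd]
  constructor
  · positivity
  · nlinarith

lemma reg3_anti (hδ : 0 < δ) (ha : δ ≤ a) (hab : a + δ ≤ 1) :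
    ∀ x y, Bfun (a+δ) ≤ x → x ≤ y → y ≤ 1 →
      Ginv a y - Ginv (a+δ) y ≤ Ginv a x - Ginv (a+δ) x := by
  intro x y hx hxy hy1
  have hx1 : x ≤ 1 := le_trans hxy hy1
  obtain ⟨sx, hsx0, hsx1, hφx, hdx⟩ := reg3_repr hδ ha hab x hx hx1
  obtain ⟨sy, hsy0, hsy1, hφy, hdy⟩ := reg3_repr hδ ha hab y (le_trans hx hxy) hy1
  have hsyx : sy ≤ sx := by
    apply phi_arg_le (x := sx) (by linarith) (by linarith)
    rw [hφx, hφy]; exact hxy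
  obtain ⟨he0, _⟩ := expb_sub_expa hδ ha hab
  rw [hdx, hdy]
  nlinarith

lemma reg2_mono (hδ : 0 < δ) (hδ' : δ ≤ 1/11) (ha : δ ≤ a) (hab : a + δ ≤ 1) :
    ∀ x y, Bfun a ≤ x → x ≤ y → y ≤ Bfun (a+δ) →
      Ginv a x - Ginv (a+δ) x ≤ Ginv a y - Ginv (a+δ) y := by
  intro x y hx hxy hy
  have ha0 : 0 < a := lt_of_lt_of_le hδ ha
  have hb1 : a + δ ≤ 1 := hab
  have hBb1 : Bfun (a+δ) ≤ 1 := B_le_one (by linarith) hb1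
  have hx1 : x ≤ 1 := le_trans (le_trans hxy hy) hBb1
  have hy1 : y ≤ 1 := le_trans hy hBb1
  -- linear formulas for Ginv (a+δ)
  have hGbx : Ginv (a+δ) x = Real.exp (a+δ-1) * x :=
    Ginv_lin (by linarith) hb1 (le_trans hxy hy)
  have hGby : Ginv (a+δ) y = Real.exp (a+δ-1) * y := Ginv_lin (by linarith) hb1 hy
  -- parametric formulas for Ginv a
  obtain ⟨sx, hsx0, hsx1, hφx⟩ := exists_param (by linarith : a ≤ 1) hx hx1
  obtain ⟨sy, hsy0, hsy1, hφy⟩ := exists_param (by linarith : a ≤ 1) (le_trans hx hxy) hy1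
  have hGax : Ginv a x = 1 - sx * Real.exp a := by
    rw [← hφx]; exact Ginv_param ha0 (by linarith) hsx0 hsx1
  have hGay : Ginv a y = 1 - sy * Real.exp a := by
    rw [← hφy]; exact Ginv_param ha0 (by linarith) hsy0 hsy1
  have hsyx : sy ≤ sx := by
    apply phi_arg_le (x := sx) (by linarith) (by linarith)
    rw [hφx, hφy]; exact hxy
  have hsyb : 1 - (a+δ) ≤ sy := by
    apply phi_arg_le (x := sy) (by linarith) (by linarith)
    rw [hφy, phi_val]; exact hy
  have ht0 : 0 ≤ sx - sy := by linarith
  -- phi sy - phi sx ≤ (e - e^{sy}) * (sx - sy)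
  have hexpt : Real.exp sy * (1 + (sx - sy)) ≤ Real.exp sx := by
    have h1 : 1 + (sx - sy) ≤ Real.exp (sx - sy) := by
      have := Real.add_one_le_exp (sx - sy); linarith
    have h2 : Real.exp sx = Real.exp sy * Real.exp (sx - sy) := by rw [← Real.exp_add]; ring_nf
    nlinarith [Real.exp_pos sy]
  have hphidiff : phi sy - phi sx ≤ (Real.exp 1 - Real.exp sy) * (sx - sy) := by
    unfold phi; nlinarith [hexpt]
  have f2 : Real.exp (1-(a+δ)) ≤ Real.exp sy := Real.exp_le_exp.mpr hsyb
  have f3 : Real.exp sy ≤ Real.exp 1 := Real.exp_le_exp.mpr (by linarith)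
  have f4 : Real.exp (a+δ-1) * Real.exp 1 = Real.exp (a+δ) := by rw [← Real.exp_add]; ring_nf
  have f5 : Real.exp (a+δ-1) * Real.exp (1-(a+δ)) = 1 := by rw [← Real.exp_add]; simp
  have hfoo : Real.exp (a+δ-1) * (Real.exp 1 - Real.exp sy) ≤ Real.exp (a+δ) - 1 := by
    have := mul_le_mul_of_nonneg_left f2 (Real.exp_pos (a+δ-1)).le
    linarith [f4, f5]
  have h51 : Real.exp (a+δ-1) * (phi sy - phi sx)
      ≤ Real.exp (a+δ-1) * ((Real.exp 1 - Real.exp sy) * (sx - sy)) :=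
    mul_le_mul_of_nonneg_left hphidiff (Real.exp_pos _).le
  have h52 : (Real.exp (a+δ-1) * (Real.exp 1 - Real.exp sy)) * (sx - sy)
      ≤ (Real.exp (a+δ) - 1) * (sx - sy) := mul_le_mul_of_nonneg_right hfoo ht0
  have h5 : Real.exp (a+δ-1) * (phi sy - phi sx) ≤ (Real.exp (a+δ) - 1) * (sx - sy) := by
    linarith [h51, h52]
  have h6 : Real.exp (a+δ) - 1 ≤ Real.exp a := by
    have hsplit2 : Real.exp (a+δ) = Real.exp a * Real.exp δ := by rw [← Real.exp_add]
    have hδe : Real.exp δ ≤ 11/10 := exp_delta_le hδ hδ'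
    have hea : Real.exp a ≤ Real.exp 1 := Real.exp_le_exp.mpr (by linarith)
    have he1 : Real.exp 1 < 2.7182818286 := Real.exp_one_lt_d9
    have hmm := mul_le_mul_of_nonneg_left hδe (Real.exp_pos a).le
    linarith
  have h7 : (Real.exp (a+δ) - 1) * (sx - sy) ≤ Real.exp a * (sx - sy) :=
    mul_le_mul_of_nonneg_right h6 ht0
  have hyx : y - x = phi sy - phi sx := by rw [hφx, hφy]
  have hfinal : Real.exp (a+δ-1) * (y - x) ≤ Real.exp a * (sx - sy) := by
    rw [hyx]; linarith
  rw [hGax, hGay, hGbx, hGby]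
  linarith [hfinal]

end Regions
section KeyA

variable {a δ : ℝ}

lemma keyA (hδ : 0 < δ) (hδ' : δ ≤ 1/11) (ha : δ ≤ a) (hab : a + δ ≤ 1) :
    ∀ x, 0 ≤ x → x ≤ 1 → |Ginv a x - Ginv (a+δ) x| ≤ δ := by
  intro x hx0 hx1
  have ha0 : 0 < a := lt_of_lt_of_le hδ ha
  have hBa0 : 0 ≤ Bfun a := B_nonneg ha0.le
  have hBb1 : Bfun (a+δ) ≤ 1 := B_le_one (by linarith) hab
  have hBab : Bfun a ≤ Bfun (a+δ) := B_mono ha0.le (by linarith)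
  rw [abs_le]
  rcases le_total x (Bfun a) with h | h
  · obtain ⟨h1, h2⟩ := reg1_bounds hδ ha hab x hx0 h
    exact ⟨h1, by linarith⟩
  · rcases le_total x (Bfun (a+δ)) with h2 | h2
    · have hlo := reg2_mono hδ hδ' ha hab (Bfun a) x le_rfl h h2
      have hhi := reg2_mono hδ hδ' ha hab x (Bfun (a+δ)) h h2 le_rfl
      obtain ⟨e1, e2⟩ := reg1_bounds hδ ha hab (Bfun a) hBa0 le_rfl
      obtain ⟨e3, e4⟩ := reg3_bounds hδ ha hab (Bfun (a+δ)) le_rfl hBb1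
      exact ⟨by linarith, by linarith⟩
    · obtain ⟨h1, h2⟩ := reg3_bounds hδ ha hab x h2 hx1
      exact ⟨by linarith, h2⟩

end KeyA

/-! ### decomposition functions -/

noncomputable def Dd (a b : ℝ) : ℝ → ℝ := fun x => Ginv a (cl x) - Ginv b (cl x)

noncomputable def Uf (a b : ℝ) : ℝ → ℝ :=
  fun x => Dd a b (min (Bfun b) (max x (Bfun a))) - Dd a b (Bfun a)

noncomputable def V1f (a b : ℝ) : ℝ → ℝ := fun x => - Dd a b (min (Bfun a) (max x 0))

noncomputable def V3f (a b : ℝ) : ℝ → ℝ :=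
  fun x => Dd a b (Bfun b) - Dd a b (min 1 (max x (Bfun b)))

lemma clamp_id {a b : ℝ} (h0 : 0 ≤ Bfun a) (h1 : Bfun a ≤ Bfun b) (h2 : Bfun b ≤ 1)
    (hD0 : Dd a b 0 = 0) (hD1 : Dd a b 1 = 0) (t : ℝ) :
    Dd a b t + V1f a b t + V3f a b t = Uf a b t := by
  have hDle : ∀ u v : ℝ, u ≤ 0 → v ≤ 0 → Dd a b u = Dd a b v := by
    intro u v hu hv; unfold Dd; rw [cl_of_le hu, cl_of_le hv]
  have hDge : ∀ u v : ℝ, 1 ≤ u → 1 ≤ v → Dd a b u = Dd a b v := by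
    intro u v hu hv; unfold Dd; rw [cl_of_ge hu, cl_of_ge hv]
  unfold Uf V1f V3f
  rcases le_total t 0 with ht | ht
  · rw [max_eq_right ht, max_eq_right (le_trans ht h0), max_eq_right (le_trans ht (le_trans h0 h1)),
      min_eq_right h0, min_eq_right h1, min_eq_right h2,
      hDle t 0 ht le_rfl, hD0]
    ring
  · rcases le_total t (Bfun a) with hta | hta
    · rw [max_eq_left ht, min_eq_right hta, max_eq_right hta, max_eq_right (le_trans hta h1),
        min_eq_right h1, min_eq_right h2]
      ring
    · rcases le_total t (Bfun b) with htb | htb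
      · rw [max_eq_left ht, min_eq_left hta, max_eq_left hta, min_eq_right htb,
          max_eq_right htb, min_eq_right h2]
        ring
      · have h0t : (0:ℝ) ≤ t := le_trans (le_trans h0 h1) htb
        have hat : Bfun a ≤ t := le_trans h1 htb
        rcases le_total t 1 with ht1 | ht1
        · rw [max_eq_left h0t, min_eq_left hat, max_eq_left hat, min_eq_left htb,
            max_eq_left htb, min_eq_right ht1]
          ring
        · rw [max_eq_left h0t, min_eq_left hat, max_eq_left hat, min_eq_left htb,
            max_eq_left htb, min_eq_left ht1, hDge t 1 ht1 le_rfl, hD1]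
          ring
noncomputable def stj (f : ℝ → ℝ) (hm : Monotone f) (hc : Continuous f) : StieltjesFunction ℝ :=
  ⟨f, hm, fun _ => hc.continuousWithinAt⟩

lemma stj_apply (f : ℝ → ℝ) (hm : Monotone f) (hc : Continuous f) :
    (stj f hm hc : ℝ → ℝ) = f := rfl

lemma keyB {a δ : ℝ} (hδ : 0 < δ) (hδ' : δ ≤ 1/11) (ha : δ ≤ a) (hab : a + δ ≤ 1) :
    ∀ A : Set ℝ, MeasurableSet A →
      |((Measure.map (Gfun a) unif01) A).toReal -
        ((Measure.map (Gfun (a+δ)) unif01) A).toReal| ≤ 2*δ := by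
  have ha0 : 0 < a := lt_of_lt_of_le hδ ha
  have ha1 : a ≤ 1 := by linarith
  set b := a + δ with hbdef
  have hb0 : 0 < b := by rw [hbdef]; linarith
  have hb1 : b ≤ 1 := hab
  have hBa0 : 0 ≤ Bfun a := B_nonneg ha0.le
  have hBab : Bfun a ≤ Bfun b := B_mono ha0.le (by rw [hbdef]; linarith)
  have hBb1 : Bfun b ≤ 1 := B_le_one hb0.le hb1
  have hBa1 : Bfun a ≤ 1 := le_trans hBab hBb1
  have hDd : ∀ z : ℝ, 0 ≤ z → z ≤ 1 → Dd a b z = Ginv a z - Ginv b z := by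
    intro z h1 h2; unfold Dd; rw [cl_of_mem ⟨h1, h2⟩]
  have hD0 : Dd a b 0 = 0 := by
    rw [hDd 0 le_rfl (by norm_num), Ginv_zero ha0 ha1, Ginv_zero hb0 hb1]; ring
  have hD1 : Dd a b 1 = 0 := by
    rw [hDd 1 (by norm_num) le_rfl, Ginv_one ha0 ha1, Ginv_one hb0 hb1]; ring
  have hDBa_ub : Dd a b (Bfun a) ≤ 0 := by
    rw [hDd _ hBa0 hBa1]; exact (reg1_bounds hδ ha hab (Bfun a) hBa0 le_rfl).2
  have hDBa_lb : -δ ≤ Dd a b (Bfun a) := by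
    rw [hDd _ hBa0 hBa1]; exact (reg1_bounds hδ ha hab (Bfun a) hBa0 le_rfl).1
  have hDBb_lb : 0 ≤ Dd a b (Bfun b) := by
    rw [hDd _ (le_trans hBa0 hBab) hBb1]
    exact (reg3_bounds hδ ha hab (Bfun b) le_rfl hBb1).1
  have hDBb_ub : Dd a b (Bfun b) ≤ δ := by
    rw [hDd _ (le_trans hBa0 hBab) hBb1]
    exact (reg3_bounds hδ ha hab (Bfun b) le_rfl hBb1).2
  -- piecewise monotonicity of Dd
  have hreg1 : ∀ u v : ℝ, 0 ≤ u → u ≤ v → v ≤ Bfun a → Dd a b v ≤ Dd a b u := by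
    intro u v h1 h2 h3
    rw [hDd u h1 (le_trans (le_trans h2 h3) hBa1), hDd v (le_trans h1 h2) (le_trans h3 hBa1)]
    exact reg1_anti hδ ha hab u v h2 h3
  have hreg2 : ∀ u v : ℝ, Bfun a ≤ u → u ≤ v → v ≤ Bfun b → Dd a b u ≤ Dd a b v := by
    intro u v h1 h2 h3
    rw [hDd u (le_trans hBa0 h1) (le_trans (le_trans h2 h3) hBb1),
      hDd v (le_trans hBa0 (le_trans h1 h2)) (le_trans h3 hBb1)]
    exact reg2_mono hδ hδ' ha hab u v h1 h2 h3
  have hreg3 : ∀ u v : ℝ, Bfun b ≤ u → u ≤ v → v ≤ 1 → Dd a b v ≤ Dd a b u := by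
    intro u v h1 h2 h3
    rw [hDd u (le_trans (le_trans hBa0 hBab) h1) (le_trans h2 h3),
      hDd v (le_trans (le_trans hBa0 hBab) (le_trans h1 h2)) h3]
    exact reg3_anti hδ ha hab u v h1 h2 h3
  have hDcont : Continuous (Dd a b) :=
    ((Ginv_cont ha0 ha1).comp cl_cont).sub ((Ginv_cont hb0 hb1).comp cl_cont)
  -- monotonicity and continuity of the pieces
  have hUmono : Monotone (Uf a b) := by
    intro x y hxy
    have hcx1 : Bfun a ≤ min (Bfun b) (max x (Bfun a)) := le_min hBab (le_max_right _ _)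
    have hcy2 : min (Bfun b) (max y (Bfun a)) ≤ Bfun b := min_le_left _ _
    have hcc : min (Bfun b) (max x (Bfun a)) ≤ min (Bfun b) (max y (Bfun a)) :=
      min_le_min le_rfl (max_le_max hxy le_rfl)
    have := hreg2 _ _ hcx1 hcc hcy2
    unfold Uf; linarith
  have hUcont : Continuous (Uf a b) := by
    unfold Uf
    exact (hDcont.comp (continuous_const.min (continuous_id.max continuous_const))).sub
      continuous_const
  have hV1mono : Monotone (V1f a b) := by
    intro x y hxy
    have hcx1 : (0:ℝ) ≤ min (Bfun a) (max x 0) := le_min hBa0 (le_max_right _ _)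
    have hcy2 : min (Bfun a) (max y 0) ≤ Bfun a := min_le_left _ _
    have hcc : min (Bfun a) (max x 0) ≤ min (Bfun a) (max y 0) :=
      min_le_min le_rfl (max_le_max hxy le_rfl)
    have := hreg1 _ _ hcx1 hcc hcy2
    unfold V1f; linarith
  have hV1cont : Continuous (V1f a b) := by
    unfold V1f
    exact (hDcont.comp (continuous_const.min (continuous_id.max continuous_const))).neg
  have hV3mono : Monotone (V3f a b) := by
    intro x y hxy
    have hcx1 : Bfun b ≤ min 1 (max x (Bfun b)) := le_min hBb1 (le_max_right _ _)
    have hcy2 : min 1 (max y (Bfun b)) ≤ 1 := min_le_left _ _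
    have hcc : min 1 (max x (Bfun b)) ≤ min 1 (max y (Bfun b)) :=
      min_le_min le_rfl (max_le_max hxy le_rfl)
    have := hreg3 _ _ hcx1 hcc hcy2
    unfold V3f; linarith
  have hV3cont : Continuous (V3f a b) := by
    unfold V3f
    exact continuous_const.sub
      (hDcont.comp (continuous_const.min (continuous_id.max continuous_const)))
  -- limits
  have hUbot : Filter.Tendsto (Uf a b) Filter.atBot (nhds 0) := by
    apply Filter.Tendsto.congr' _ tendsto_const_nhds
    filter_upwards [Filter.eventually_le_atBot (Bfun a)] with x hx
    show (0:ℝ) = Uf a b x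
    unfold Uf
    rw [max_eq_right hx, min_eq_right hBab]; ring
  have hUtop : Filter.Tendsto (Uf a b) Filter.atTop
      (nhds (Dd a b (Bfun b) - Dd a b (Bfun a))) := by
    apply Filter.Tendsto.congr' _ tendsto_const_nhds
    filter_upwards [Filter.eventually_ge_atTop (Bfun b)] with x hx
    show Dd a b (Bfun b) - Dd a b (Bfun a) = Uf a b x
    unfold Uf
    rw [max_eq_left (le_trans hBab hx), min_eq_left hx]
  have hV1bot : Filter.Tendsto (V1f a b) Filter.atBot (nhds 0) := by
    apply Filter.Tendsto.congr' _ tendsto_const_nhds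
    filter_upwards [Filter.eventually_le_atBot (0:ℝ)] with x hx
    show (0:ℝ) = V1f a b x
    unfold V1f
    rw [max_eq_right hx, min_eq_right hBa0, hD0]; ring
  have hV1top : Filter.Tendsto (V1f a b) Filter.atTop (nhds (-(Dd a b (Bfun a)))) := by
    apply Filter.Tendsto.congr' _ tendsto_const_nhds
    filter_upwards [Filter.eventually_ge_atTop (Bfun a)] with x hx
    show -(Dd a b (Bfun a)) = V1f a b x
    unfold V1f
    rw [max_eq_left (le_trans hBa0 hx), min_eq_left hx]
  have hV3bot : Filter.Tendsto (V3f a b) Filter.atBot (nhds 0) := by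
    apply Filter.Tendsto.congr' _ tendsto_const_nhds
    filter_upwards [Filter.eventually_le_atBot (Bfun b)] with x hx
    show (0:ℝ) = V3f a b x
    unfold V3f
    rw [max_eq_right hx, min_eq_right hBb1]; ring
  have hV3top : Filter.Tendsto (V3f a b) Filter.atTop (nhds (Dd a b (Bfun b))) := by
    apply Filter.Tendsto.congr' _ tendsto_const_nhds
    filter_upwards [Filter.eventually_ge_atTop (1:ℝ)] with x hx
    show Dd a b (Bfun b) = V3f a b x
    unfold V3f
    rw [max_eq_left (le_trans hBb1 hx), min_eq_left hx, hD1]; ring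
  -- Stieltjes functions and measures
  set SU := stj (Uf a b) hUmono hUcont with hSU
  set SV1 := stj (V1f a b) hV1mono hV1cont with hSV1
  set SV3 := stj (V3f a b) hV3mono hV3cont with hSV3
  haveI hfina : IsFiniteMeasure (Measure.map (Gfun a) unif01) := mapG_finite a
  haveI hfinb : IsFiniteMeasure (Measure.map (Gfun b) unif01) := mapG_finite b
  haveI hfinU : IsFiniteMeasure SU.measure :=
    ⟨by rw [SU.measure_univ hUbot hUtop]; exact ENNReal.ofReal_lt_top⟩
  haveI hfinV1 : IsFiniteMeasure SV1.measure :=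
    ⟨by rw [SV1.measure_univ hV1bot hV1top]; exact ENNReal.ofReal_lt_top⟩
  haveI hfinV3 : IsFiniteMeasure SV3.measure :=
    ⟨by rw [SV3.measure_univ hV3bot hV3top]; exact ENNReal.ofReal_lt_top⟩
  -- the key measure identity
  have hmeq : Measure.map (Gfun a) unif01 + (SV1.measure + SV3.measure)
      = Measure.map (Gfun b) unif01 + SU.measure := by
    refine Measure.ext_of_Iic _ _ (fun t => ?_)
    rw [Measure.add_apply, Measure.add_apply, Measure.add_apply,
      mapG_Iic ha0 ha1 t, mapG_Iic hb0 hb1 t,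
      SV1.measure_Iic hV1bot t, SV3.measure_Iic hV3bot t, SU.measure_Iic hUbot t,
      sub_zero, sub_zero, sub_zero]
    have hFa0 : 0 ≤ Ginv a (cl t) := (Ginv_mem ha0 ha1 (cl_mem t)).1
    have hFb0 : 0 ≤ Ginv b (cl t) := (Ginv_mem hb0 hb1 (cl_mem t)).1
    have hV1nn : 0 ≤ V1f a b t := by
      have c1 : (0:ℝ) ≤ min (Bfun a) (max t 0) := le_min hBa0 (le_max_right _ _)
      have c2 : min (Bfun a) (max t 0) ≤ Bfun a := min_le_left _ _
      have := hreg1 0 _ le_rfl c1 c2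
      rw [hD0] at this
      unfold V1f; linarith
    have hV3nn : 0 ≤ V3f a b t := by
      have c1 : Bfun b ≤ min 1 (max t (Bfun b)) := le_min hBb1 (le_max_right _ _)
      have c2 : min 1 (max t (Bfun b)) ≤ 1 := min_le_left _ _
      have := hreg3 _ _ le_rfl c1 c2
      unfold V3f; linarith
    have hUnn : 0 ≤ Uf a b t := by
      have c1 : Bfun a ≤ min (Bfun b) (max t (Bfun a)) := le_min hBab (le_max_right _ _)
      have c2 : min (Bfun b) (max t (Bfun a)) ≤ Bfun b := min_le_left _ _
      have := hreg2 _ _ le_rfl c1 c2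
      unfold Uf; linarith
    rw [hSV1, hSV3, hSU, stj_apply, stj_apply, stj_apply]
    rw [← ENNReal.ofReal_add hV1nn hV3nn, ← ENNReal.ofReal_add hFa0 (add_nonneg hV1nn hV3nn),
      ← ENNReal.ofReal_add hFb0 hUnn]
    congr 1
    have hid := clamp_id hBa0 hBab hBb1 hD0 hD1 t
    have hDt : Dd a b t = Ginv a (cl t) - Ginv b (cl t) := rfl
    linarith [hid, hDt ▸ hid]
  -- conclude for every measurable set
  intro A hA
  have happ := congrArg (fun (μ : Measure ℝ) => μ A) hmeq
  simp only [Measure.add_apply] at happ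
  have hne1 : Measure.map (Gfun a) unif01 A ≠ ⊤ := measure_ne_top _ _
  have hne2 : SV1.measure A ≠ ⊤ := measure_ne_top _ _
  have hne3 : SV3.measure A ≠ ⊤ := measure_ne_top _ _
  have hne4 : Measure.map (Gfun b) unif01 A ≠ ⊤ := measure_ne_top _ _
  have hne5 : SU.measure A ≠ ⊤ := measure_ne_top _ _
  have hre : (Measure.map (Gfun a) unif01 A).toReal
        + ((SV1.measure A).toReal + (SV3.measure A).toReal)
      = (Measure.map (Gfun b) unif01 A).toReal + (SU.measure A).toReal := by
    rw [← ENNReal.toReal_add hne2 hne3,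
      ← ENNReal.toReal_add hne1 (ENNReal.add_ne_top.mpr ⟨hne2, hne3⟩),
      ← ENNReal.toReal_add hne4 hne5, happ]
  -- bounds on the auxiliary measures
  have htotU : (SU.measure Set.univ).toReal = Dd a b (Bfun b) - Dd a b (Bfun a) := by
    rw [SU.measure_univ hUbot hUtop, sub_zero, ENNReal.toReal_ofReal (by linarith)]
  have htotV1 : (SV1.measure Set.univ).toReal = -(Dd a b (Bfun a)) := by
    rw [SV1.measure_univ hV1bot hV1top, sub_zero, ENNReal.toReal_ofReal (by linarith)]
  have htotV3 : (SV3.measure Set.univ).toReal = Dd a b (Bfun b) := by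
    rw [SV3.measure_univ hV3bot hV3top, sub_zero, ENNReal.toReal_ofReal (by linarith)]
  have hmU : (SU.measure A).toReal ≤ (SU.measure Set.univ).toReal :=
    ENNReal.toReal_mono (measure_ne_top _ _) (measure_mono (Set.subset_univ _))
  have hmV1 : (SV1.measure A).toReal ≤ (SV1.measure Set.univ).toReal :=
    ENNReal.toReal_mono (measure_ne_top _ _) (measure_mono (Set.subset_univ _))
  have hmV3 : (SV3.measure A).toReal ≤ (SV3.measure Set.univ).toReal :=
    ENNReal.toReal_mono (measure_ne_top _ _) (measure_mono (Set.subset_univ _))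
  have nn1 : 0 ≤ (SV1.measure A).toReal := ENNReal.toReal_nonneg
  have nn3 : 0 ≤ (SV3.measure A).toReal := ENNReal.toReal_nonneg
  have nnU : 0 ≤ (SU.measure A).toReal := ENNReal.toReal_nonneg
  rw [abs_le]
  constructor
  · linarith [hre, hmV1, hmV3, htotV1, htotV3]
  · linarith [hre, hmU, htotU]


/-- The total variation distance `sup_A |μ(A) − ν(A)|` between two Borel probability
measures on `ℝ`, the supremum running over Borel (measurable) sets `A`. -/
noncomputable def tvDistM (μ ν : Measure ℝ) : ℝ :=
  sSup {r : ℝ | ∃ A : Set ℝ, MeasurableSet A ∧ r = |(μ A).toReal - (ν A).toReal|}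

/-- For `b = a + 1/m` (with `1/m ≤ a` and `b ≤ 1`),
`max_{x ∈ [0,1]} |G_a⁻¹(x) − G_b⁻¹(x)| < 11/m`; consequently, for `V` uniform on `[0,1]`,
the total variation distance between the laws of `G_a(V)` and `G_b(V)` is less than
`11/m`. -/
theorem tv_G_lt (m : ℕ) (hm : 2 ≤ m) (a : ℝ) (ha : 1 / (m : ℝ) ≤ a)
    (hab : a + 1 / (m : ℝ) ≤ 1) :
    sSup ((fun x => |Ginv a x - Ginv (a + 1 / m) x|) '' Set.Icc (0 : ℝ) 1) < 11 / m ∧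
    tvDistM (Measure.map (Gfun a) unif01) (Measure.map (Gfun (a + 1 / m)) unif01) <
      11 / m := by
  have hmpos : (0:ℝ) < m := by
    have : 0 < m := by omega
    exact_mod_cast this
  set δ := 1 / (m:ℝ) with hδdef
  have hδ : 0 < δ := by positivity
  have ha0 : 0 < a := lt_of_lt_of_le hδ ha
  have ha1 : a ≤ 1 := by linarith
  have hb0 : 0 < a + δ := by linarith
  have hb1 : a + δ ≤ 1 := hab
  have h11δ : 11 / (m:ℝ) = 11 * δ := by rw [hδdef, mul_one_div]
  rcases le_or_gt 11 m with hm11 | hm11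
  · -- main case : δ ≤ 1/11
    have hδ' : δ ≤ 1/11 := by
      rw [hδdef]
      apply one_div_le_one_div_of_le (by norm_num)
      exact_mod_cast hm11
    constructor
    · have hle : sSup ((fun x => |Ginv a x - Ginv (a + δ) x|) '' Set.Icc (0 : ℝ) 1) ≤ δ := by
        apply Real.sSup_le _ hδ.le
        rintro y ⟨x, hx, rfl⟩
        exact keyA hδ hδ' ha hab x hx.1 hx.2
      calc sSup ((fun x => |Ginv a x - Ginv (a + δ) x|) '' Set.Icc (0 : ℝ) 1) ≤ δ := hle
        _ < 11 / m := by rw [h11δ]; linarith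
    · have hle : tvDistM (Measure.map (Gfun a) unif01)
          (Measure.map (Gfun (a + δ)) unif01) ≤ 2 * δ := by
        apply Real.sSup_le _ (by linarith)
        rintro r ⟨A, hA, rfl⟩
        exact keyB hδ hδ' ha hab A hA
      calc tvDistM (Measure.map (Gfun a) unif01) (Measure.map (Gfun (a + δ)) unif01)
          ≤ 2 * δ := hle
        _ < 11 / m := by rw [h11δ]; linarith
  · -- trivial case : m ≤ 10, so 11/m > 1
    have hm11' : (m:ℝ) < 11 := by exact_mod_cast hm11
    have h1lt : (1:ℝ) < 11 / m := (one_lt_div hmpos).mpr hm11'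
    constructor
    · have hle : sSup ((fun x => |Ginv a x - Ginv (a + δ) x|) '' Set.Icc (0 : ℝ) 1) ≤ 1 := by
        apply Real.sSup_le _ (by norm_num)
        rintro y ⟨x, hx, rfl⟩
        obtain ⟨p1, p2⟩ := Ginv_mem ha0 ha1 hx
        obtain ⟨q1, q2⟩ := Ginv_mem hb0 hb1 hx
        rw [abs_le]
        exact ⟨by linarith, by linarith⟩
      linarith
    · have hle : tvDistM (Measure.map (Gfun a) unif01)
          (Measure.map (Gfun (a + δ)) unif01) ≤ 1 := by
        apply Real.sSup_le _ (by norm_num)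
        rintro r ⟨A, hA, rfl⟩
        have key : ∀ c : ℝ, ((Measure.map (Gfun c) unif01) A).toReal ≤ 1 ∧
            0 ≤ ((Measure.map (Gfun c) unif01) A).toReal := by
          intro c
          constructor
          · have h1 : (Measure.map (Gfun c) unif01) A ≤ 1 := by
              rw [← mapG_univ c]
              exact measure_mono (Set.subset_univ _)
            have := ENNReal.toReal_mono ENNReal.one_ne_top h1
            simpa using this
          · exact ENNReal.toReal_nonneg
        obtain ⟨u1, u2⟩ := key a
        obtain ⟨v1, v2⟩ := key (a + δ)
        rw [abs_le]
        exact ⟨by linarith, by linarith⟩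
      linarith
end

section
/- For every a ∈ (0,1], the function G_a is differentiable at every u ∈ (0,1) with u ≠ u₀(a), with G_a′(u) = e^{1−a} for u < u₀(a) and G_a′(u) = e^{1−a} − e^{−a}·e^{e^{−a}(1−u)} for u > u₀(a); moreover G_a′ is nondecreasing on (u₀(a), 1), and G_a′(u) > a/2 for all u ∈ (u₀(a), 1). -/
lemma exp_neg_le_quad {a : ℝ} (ha : 0 ≤ a) : Real.exp (-a) ≤ 1 - a + a ^ 2 / 2 := by
  have h1 : 1 + a + a ^ 2 / 2 ≤ Real.exp a := Real.quadratic_le_exp_of_nonneg ha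
  have h2 : (0:ℝ) < 1 + a + a ^ 2 / 2 := by nlinarith
  have h3 : Real.exp (-a) = 1 / Real.exp a := by
    rw [Real.exp_neg]; ring
  rw [h3]
  have h4 : (1:ℝ) / Real.exp a ≤ 1 / (1 + a + a ^ 2 / 2) :=
    one_div_le_one_div_of_le h2 h1
  refine h4.trans ?_
  rw [div_le_iff₀ h2]
  nlinarith

/-- For every `a ∈ (0,1]`, `G_a` is differentiable at every `u ∈ (0,1)` with `u ≠ u₀(a)`:
`G_a′(u) = e^{1-a}` for `u < u₀(a)` and `G_a′(u) = e^{1-a} − e^{-a}·e^{e^{-a}(1-u)}` for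
`u > u₀(a)`; moreover this derivative is nondecreasing on `(u₀(a), 1)` and exceeds `a/2`
there. -/
theorem Gfun_deriv (a : ℝ) (ha : a ∈ Set.Ioc (0 : ℝ) 1) :
    (∀ u ∈ Set.Ioo (0 : ℝ) 1, u < u0 a → HasDerivAt (Gfun a) (Real.exp (1 - a)) u) ∧
    (∀ u ∈ Set.Ioo (0 : ℝ) 1, u0 a < u →
      HasDerivAt (Gfun a)
        (Real.exp (1 - a) - Real.exp (-a) * Real.exp (Real.exp (-a) * (1 - u))) u) ∧
    MonotoneOn (fun u => Real.exp (1 - a) - Real.exp (-a) * Real.exp (Real.exp (-a) * (1 - u)))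
      (Set.Ioo (u0 a) 1) ∧
    (∀ u ∈ Set.Ioo (u0 a) 1,
      a / 2 < Real.exp (1 - a) - Real.exp (-a) * Real.exp (Real.exp (-a) * (1 - u))) := by
  obtain ⟨ha0, ha1⟩ := ha
  refine ⟨?_, ?_, ?_, ?_⟩
  · intro u hu hlt
    have heq : Gfun a =ᶠ[nhds u] fun v => Real.exp (1 - a) * v := by
      filter_upwards [Iio_mem_nhds hlt] with v hv
      simp [Gfun, le_of_lt (show v < u0 a from hv)]
    have : HasDerivAt (fun v => Real.exp (1 - a) * v) (Real.exp (1 - a)) u := by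
      simpa using (hasDerivAt_id u).const_mul (Real.exp (1 - a))
    exact this.congr_of_eventuallyEq heq
  · intro u hu hlt
    have heq : Gfun a =ᶠ[nhds u]
        fun v => Real.exp (Real.exp (-a) * (1 - v)) - (1 - v) * Real.exp (1 - a) := by
      filter_upwards [Ioi_mem_nhds hlt] with v hv
      simp [Gfun, not_le.mpr (show u0 a < v from hv)]
    have h1 : HasDerivAt (fun v : ℝ => Real.exp (-a) * (1 - v)) (-Real.exp (-a)) u := by
      simpa using ((hasDerivAt_id u).const_sub 1).const_mul (Real.exp (-a))
    have h2 : HasDerivAt (fun v : ℝ => Real.exp (Real.exp (-a) * (1 - v)))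
        (Real.exp (Real.exp (-a) * (1 - u)) * (-Real.exp (-a))) u := h1.exp
    have h4 : HasDerivAt (fun v : ℝ => (1 - v) * Real.exp (1 - a)) (-Real.exp (1 - a)) u := by
      simpa using ((hasDerivAt_id u).const_sub 1).mul_const (Real.exp (1 - a))
    have := (h2.sub h4).congr_of_eventuallyEq heq
    exact this.congr_deriv (by ring)
  · intro u hu v hv huv
    have h1 : Real.exp (-a) * (1 - v) ≤ Real.exp (-a) * (1 - u) :=
      mul_le_mul_of_nonneg_left (by linarith) (Real.exp_nonneg _)
    have h2 : Real.exp (-a) * Real.exp (Real.exp (-a) * (1 - v))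
        ≤ Real.exp (-a) * Real.exp (Real.exp (-a) * (1 - u)) :=
      mul_le_mul_of_nonneg_left (Real.exp_le_exp.2 h1) (Real.exp_nonneg _)
    simp only []
    linarith
  · intro u hu
    obtain ⟨hu0, hu1⟩ := hu
    have key : Real.exp (-a) * (1 - u) < 1 - a := by
      have h1 : 1 - u0 a = (1 - a) * Real.exp a := by simp [u0]
      have h2 : Real.exp (-a) * (1 - u0 a) = 1 - a := by
        rw [h1, ← mul_assoc, mul_comm (Real.exp (-a)), mul_assoc, ← Real.exp_add]
        simp
      rw [← h2]
      exact mul_lt_mul_of_pos_left (by linarith) (Real.exp_pos _)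
    have h3 : Real.exp (-a) * Real.exp (Real.exp (-a) * (1 - u))
        < Real.exp (-a) * Real.exp (1 - a) :=
      mul_lt_mul_of_pos_left (Real.exp_lt_exp.2 key) (Real.exp_pos _)
    have h4 : Real.exp (-a) * Real.exp (1 - a) = Real.exp (1 - a) * Real.exp (-a) := by ring
    have h5 : Real.exp (1 - a) * (1 - Real.exp (-a)) ≥ a / 2 := by
      have hq : Real.exp (-a) ≤ 1 - a + a ^ 2 / 2 := exp_neg_le_quad ha0.le
      have he1 : (1:ℝ) ≤ Real.exp (1 - a) := Real.one_le_exp (by linarith)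
      have hpos : 0 ≤ a - a ^ 2 / 2 := by nlinarith
      calc a / 2 ≤ a - a ^ 2 / 2 := by nlinarith
        _ = 1 * (a - a ^ 2 / 2) := by ring
        _ ≤ Real.exp (1 - a) * (a - a ^ 2 / 2) := by
            exact mul_le_mul_of_nonneg_right he1 hpos
        _ ≤ Real.exp (1 - a) * (1 - Real.exp (-a)) := by
            apply mul_le_mul_of_nonneg_left (by linarith) (Real.exp_nonneg _)
    nlinarith [Real.exp_pos (1 - a)]
end
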